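/- For all integers n ≥ 1 and 1 ≤ i ≤ ⌊n/2⌋ and 1 ≤ k, the following identity of binomial coefficients holds: Σ_{j=i}^{n-i} [C(n-j,k)·C(j-1,k-1) - C(n-j-1,k)·C(j,k-1)] = ((n+1-2i)/k)·C(n-i,k-1)·C(i-1,k-1). -/

import Mathlib

/-- The binomial coefficient `C(a,b)` for integer arguments, with the convention that
`C(a,b) = 0` unless `0 ≤ b ≤ a`. -/
def Cb (a b : ℤ) : ℚ :=
  if 0 ≤ b ∧ b ≤ a then (a.toNat.choose b.toNat : ℚ) else 0

lemma Cb_absorb (a k : ℤ) (hk : 1 ≤ k) :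
    (k : ℚ) * Cb a k = ((a : ℚ) - k + 1) * Cb a (k - 1) := by
  unfold Cb
  by_cases h : 0 ≤ k ∧ k ≤ a
  · rw [if_pos h, if_pos ⟨by omega, by omega⟩]
    obtain ⟨-, hka⟩ := h
    have h2 : (k - 1).toNat = k.toNat - 1 := by omega
    have key := Nat.choose_succ_right_eq a.toNat (k.toNat - 1)
    have h3 : k.toNat - 1 + 1 = k.toNat := by omega
    rw [h3] at key
    rw [h2]
    have ha : ((a.toNat : ℕ) : ℚ) = (a : ℚ) := by
      have := Int.toNat_of_nonneg (show (0:ℤ) ≤ a by omega); exact_mod_cast this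
    have hk' : ((k.toNat : ℕ) : ℚ) = (k : ℚ) := by
      have := Int.toNat_of_nonneg (show (0:ℤ) ≤ k by omega); exact_mod_cast this
    qify [show k.toNat - 1 ≤ a.toNat by omega, show 1 ≤ k.toNat by omega] at key
    rw [ha, hk'] at key
    linarith [key]
  · rw [if_neg h]
    by_cases h' : 0 ≤ k - 1 ∧ k - 1 ≤ a
    · rw [if_pos h']
      have : a = k - 1 := by omega
      subst this
      have : ((k : ℚ) - 1) - k + 1 = 0 := by ring
      rw [show ((k - 1 : ℤ) : ℚ) = (k : ℚ) - 1 by push_cast; ring, this, zero_mul, mul_zero]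
    · rw [if_neg h', mul_zero, mul_zero]

/-- For `n ≥ 1`, `1 ≤ i ≤ ⌊n/2⌋` and `k ≥ 1`:
`Σ_{j=i}^{n-i} [C(n-j,k)C(j-1,k-1) - C(n-j-1,k)C(j,k-1)]
  = ((n+1-2i)/k) C(n-i,k-1) C(i-1,k-1)`. -/
theorem stmt10 (n i k : ℤ) (hn : 1 ≤ n) (hi1 : 1 ≤ i) (hi2 : i ≤ n / 2) (hk : 1 ≤ k) :
    ∑ j ∈ Finset.Icc i (n - i),
        (Cb (n - j) k * Cb (j - 1) (k - 1) - Cb (n - j - 1) k * Cb j (k - 1))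
      = ((n : ℚ) + 1 - 2 * i) / (k : ℚ) * Cb (n - i) (k - 1) * Cb (i - 1) (k - 1) := by
  have h2i : 2 * i ≤ n := by omega
  set f : ℤ → ℚ := fun j => Cb (n - j) k * Cb (j - 1) (k - 1) with hf
  have hterm : ∀ j : ℤ, Cb (n - j) k * Cb (j - 1) (k - 1) - Cb (n - j - 1) k * Cb j (k - 1)
      = f j - f (j + 1) := by
    intro j
    simp only [hf]
    ring_nf
  set N : ℕ := (n - 2 * i + 1).toNat with hN
  have hNval : (N : ℤ) = n - 2 * i + 1 := by omega
  have hmap : Finset.Icc i (n - i) = (Finset.range N).map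
      ⟨fun t : ℕ => i + t, fun a b hab => by simpa using hab⟩ := by
    ext x
    simp only [Finset.mem_Icc, Finset.mem_map, Finset.mem_range,
      Function.Embedding.coeFn_mk]
    constructor
    · rintro ⟨h1, h2⟩
      exact ⟨(x - i).toNat, by omega, by change i + (((x - i).toNat : ℕ) : ℤ) = x; omega⟩
    · rintro ⟨t, ht, rfl⟩
      change i ≤ i + (t : ℤ) ∧ i + (t : ℤ) ≤ n - i
      omega
  have hsum : ∑ j ∈ Finset.Icc i (n - i),
      (Cb (n - j) k * Cb (j - 1) (k - 1) - Cb (n - j - 1) k * Cb j (k - 1))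
      = f i - f (i + N) := by
    calc ∑ j ∈ Finset.Icc i (n - i),
        (Cb (n - j) k * Cb (j - 1) (k - 1) - Cb (n - j - 1) k * Cb j (k - 1))
        = ∑ j ∈ Finset.Icc i (n - i), (f j - f (j + 1)) := by
          exact Finset.sum_congr rfl fun j _ => hterm j
      _ = ∑ t ∈ Finset.range N, (f (i + t) - f (i + t + 1)) := by
          rw [hmap, Finset.sum_map]; rfl
      _ = ∑ t ∈ Finset.range N, ((fun t : ℕ => f (i + t)) t - (fun t : ℕ => f (i + t)) (t + 1)) := by
          apply Finset.sum_congr rfl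
          intro t _
          congr 1
          all_goals (push_cast; ring_nf)
      _ = f (i + (0 : ℕ)) - f (i + N) := Finset.sum_range_sub' (fun t : ℕ => f (i + t)) N
      _ = f i - f (i + N) := by norm_num
  rw [hsum]
  have hiN : i + (N : ℤ) = n - i + 1 := by omega
  rw [hiN]
  simp only [hf]
  have e1 : n - (n - i + 1) = i - 1 := by ring
  have e2 : n - i + 1 - 1 = n - i := by ring
  rw [e1, e2]
  -- now: Cb (n-i) k * Cb (i-1) (k-1) - Cb (i-1) k * Cb (n-i) (k-1) = RHS
  have habs1 := Cb_absorb (n - i) k hk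
  have habs2 := Cb_absorb (i - 1) k hk
  have hk0 : (k : ℚ) ≠ 0 := by positivity
  field_simp
  push_cast at habs1 habs2 ⊢
  linear_combination Cb (i - 1) (k - 1) * habs1 - Cb (n - i) (k - 1) * habs2
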